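/- Let θ ∈ [0,1]. Define e₊ = (1/√2)·( ((1−θ)/√(1+θ²))·e^{−iπ/4} , ((1+θ)/√(1+θ²))·e^{iπ/4} ) ∈ ℂ² and e₋ = (1/√2)·( ((1+θ)/√(1+θ²))·e^{iπ/4} , ((1−θ)/√(1+θ²))·e^{−iπ/4} ) ∈ ℂ². Then e₊ and e₋ form an orthonormal basis of ℂ² for the Hermitian inner product ⟨u,v⟩ = u₁·conj(v₁) + u₂·conj(v₂), and both e₊ and e₋ belong to Γ_θ, i.e. there exist τ₊, τ₋ ∈ ℂ with e₊ = (τ₊ + iθ·conj(τ₊), conj(τ₊) + iθ·τ₊) and e₋ = (τ₋ + iθ·conj(τ₋), conj(τ₋) + iθ·τ₋). -/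

import Mathlib

set_option maxHeartbeats 1000000


open Complex ComplexConjugate

/-- For θ ∈ [0,1], the vectors e₊, e₋ form an orthonormal basis of ℂ²
(for the Hermitian inner product ⟨u,v⟩ = u₁·conj v₁ + u₂·conj v₂) and both belong to
the contour Γ_θ = {(τ + iθ·conj τ, conj τ + iθ·τ) : τ ∈ ℂ}. -/
theorem stmt0 (θ : ℝ) (hθ : θ ∈ Set.Icc (0:ℝ) 1)
    (ep em : ℂ × ℂ)
    (hep : ep = ((((1/Real.sqrt 2) * ((1-θ)/Real.sqrt (1+θ^2)) : ℝ) : ℂ)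
                    * Complex.exp (-(Real.pi/4) * Complex.I),
                 (((1/Real.sqrt 2) * ((1+θ)/Real.sqrt (1+θ^2)) : ℝ) : ℂ)
                    * Complex.exp ((Real.pi/4) * Complex.I)))
    (hem : em = ((((1/Real.sqrt 2) * ((1+θ)/Real.sqrt (1+θ^2)) : ℝ) : ℂ)
                    * Complex.exp ((Real.pi/4) * Complex.I),
                 (((1/Real.sqrt 2) * ((1-θ)/Real.sqrt (1+θ^2)) : ℝ) : ℂ)
                    * Complex.exp (-(Real.pi/4) * Complex.I))) :
    ep.1 * conj ep.1 + ep.2 * conj ep.2 = 1 ∧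
    em.1 * conj em.1 + em.2 * conj em.2 = 1 ∧
    ep.1 * conj em.1 + ep.2 * conj em.2 = 0 ∧
    (∀ v : ℂ × ℂ, ∃ a b : ℂ, v = (a * ep.1 + b * em.1, a * ep.2 + b * em.2)) ∧
    (∃ τ : ℂ, ep = (τ + Complex.I * θ * conj τ, conj τ + Complex.I * θ * τ)) ∧
    (∃ τ : ℂ, em = (τ + Complex.I * θ * conj τ, conj τ + Complex.I * θ * τ)) := by
  have hs0 : Real.sqrt 2 ≠ 0 := by positivity
  have hr0 : Real.sqrt (1+θ^2) ≠ 0 := by positivity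
  have hs0' : ((Real.sqrt 2 : ℝ):ℂ) ≠ 0 := by exact_mod_cast hs0
  have hr0' : ((Real.sqrt (1+θ^2) : ℝ):ℂ) ≠ 0 := by exact_mod_cast hr0
  have hr2 : ((Real.sqrt (1+θ^2) : ℝ):ℂ)^2 = 1 + (θ:ℂ)^2 := by
    have : (Real.sqrt (1+θ^2))^2 = 1 + θ^2 := Real.sq_sqrt (by positivity)
    exact_mod_cast this
  have hE : Complex.exp ((Real.pi/4) * Complex.I)
      = ((Real.sqrt 2/2 : ℝ) : ℂ) * (1 + Complex.I) := by
    rw [show ((Real.pi : ℂ)/4) = ((Real.pi/4 : ℝ) : ℂ) by push_cast; ring, Complex.exp_mul_I,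
      ← Complex.ofReal_cos, ← Complex.ofReal_sin, Real.cos_pi_div_four, Real.sin_pi_div_four]
    push_cast; ring
  have hE' : Complex.exp (-(Real.pi/4) * Complex.I)
      = ((Real.sqrt 2/2 : ℝ) : ℂ) * (1 - Complex.I) := by
    rw [show (-((Real.pi : ℂ)/4)) = ((-(Real.pi/4) : ℝ) : ℂ) by push_cast; ring, Complex.exp_mul_I,
      ← Complex.ofReal_cos, ← Complex.ofReal_sin, Real.cos_neg, Real.sin_neg,
      Real.cos_pi_div_four, Real.sin_pi_div_four]
    push_cast; ring
  have hep1 : ep.1 = (((1-θ)/(2*Real.sqrt (1+θ^2)) : ℝ) : ℂ) * (1 - Complex.I) := by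
    rw [hep]; dsimp only; rw [hE']; push_cast; field_simp
  have hep2 : ep.2 = (((1+θ)/(2*Real.sqrt (1+θ^2)) : ℝ) : ℂ) * (1 + Complex.I) := by
    rw [hep]; dsimp only; rw [hE]; push_cast; field_simp
  have hem1 : em.1 = (((1+θ)/(2*Real.sqrt (1+θ^2)) : ℝ) : ℂ) * (1 + Complex.I) := by
    rw [hem]; dsimp only; rw [hE]; push_cast; field_simp
  have hem2 : em.2 = (((1-θ)/(2*Real.sqrt (1+θ^2)) : ℝ) : ℂ) * (1 - Complex.I) := by
    rw [hem]; dsimp only; rw [hE']; push_cast; field_simp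
  clear hep hem hE hE'
  have hconj : ∀ x : ℝ, (conj (((x : ℝ):ℂ) * (1 - Complex.I)) = ((x : ℝ):ℂ) * (1 + Complex.I))
      ∧ (conj (((x : ℝ):ℂ) * (1 + Complex.I)) = ((x : ℝ):ℂ) * (1 - Complex.I)) := by
    intro x
    constructor <;>
      · simp only [map_mul, map_sub, map_add, map_one, Complex.conj_ofReal, Complex.conj_I]
        ring
  have hdet : ep.1 * em.2 - em.1 * ep.2 = -Complex.I := by
    rw [hep1, hep2, hem1, hem2]
    push_cast
    field_simp
    linear_combination (4*Complex.I)*hr2 + (-4*(θ:ℂ))*Complex.I_sq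
  refine ⟨?_, ?_, ?_, ?_, ?_, ?_⟩
  · rw [hep1, hep2, (hconj _).1, (hconj _).2]
    push_cast
    field_simp
    linear_combination (-4:ℂ)*hr2 - 2*(1+(θ:ℂ)^2)*Complex.I_sq
  · rw [hem1, hem2, (hconj _).2, (hconj _).1]
    push_cast
    field_simp
    linear_combination (-4:ℂ)*hr2 - 2*(1+(θ:ℂ)^2)*Complex.I_sq
  · rw [hep1, hep2, hem1, hem2, (hconj _).2, (hconj _).1]
    push_cast
    field_simp
    linear_combination (2-2*(θ:ℂ)^2)*Complex.I_sq
  · intro v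
    refine ⟨Complex.I * (v.1 * em.2 - v.2 * em.1), Complex.I * (ep.1 * v.2 - ep.2 * v.1), ?_⟩
    have h1 : v.1 = Complex.I * (v.1 * em.2 - v.2 * em.1) * ep.1
        + Complex.I * (ep.1 * v.2 - ep.2 * v.1) * em.1 := by
      linear_combination (-Complex.I * v.1) * hdet + (v.1) * Complex.I_sq
    have h2 : v.2 = Complex.I * (v.1 * em.2 - v.2 * em.1) * ep.2
        + Complex.I * (ep.1 * v.2 - ep.2 * v.1) * em.2 := by
      linear_combination (-Complex.I * v.2) * hdet + (v.2) * Complex.I_sq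
    exact Prod.ext h1 h2
  · refine ⟨((1/(2*Real.sqrt (1+θ^2)) : ℝ) : ℂ) * (1 - Complex.I), ?_⟩
    rw [(hconj _).1]
    refine Prod.ext ?_ ?_ <;> dsimp only <;> simp only [hep1, hep2] <;> push_cast <;> field_simp <;>
      first
      | linear_combination (-(θ:ℂ)) * Complex.I_sq
      | linear_combination ((θ:ℂ)) * Complex.I_sq
  · refine ⟨((1/(2*Real.sqrt (1+θ^2)) : ℝ) : ℂ) * (1 + Complex.I), ?_⟩
    rw [(hconj _).2]
    refine Prod.ext ?_ ?_ <;> dsimp only <;> simp only [hem1, hem2] <;> push_cast <;> field_simp <;>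
      first
      | linear_combination (-(θ:ℂ)) * Complex.I_sq
      | linear_combination ((θ:ℂ)) * Complex.I_sq
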